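/- Let G be a group and suppose that S ⊆ G is a generating set for G. Then S is an IG-set if and only if for every function assigning to each s ∈ S an element g_s ∈ G, the subgroup generated by the conjugates {g_s⁻¹ s g_s : s ∈ S} contains the commutator subgroup G' = [G,G]. -/

import Mathlib

/-- `S` is an invariable generating set (IG-set) of `G`. -/
def IsIGSet {G : Type*} [Group G] (S : Set G) : Prop :=
  ∀ f : G → G, Subgroup.closure ((fun s => (f s)⁻¹ * s * f s) '' S) = ⊤

open scoped commutatorElement

theorem isIGSet_iff_conjugates_contain_commutator
    {G : Type*} [Group G] (S : Set G) (hS : Subgroup.closure S = ⊤) :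
    IsIGSet S ↔
      ∀ f : G → G,
        commutator G ≤ Subgroup.closure ((fun s => (f s)⁻¹ * s * f s) '' S) := by
  constructor
  · intro h f
    rw [h f]
    exact le_top
  · intro h f
    rw [eq_top_iff, ← hS, Subgroup.closure_le]
    intro s hs
    have hc : (f s)⁻¹ * s * f s ∈ Subgroup.closure ((fun s => (f s)⁻¹ * s * f s) '' S) :=
      Subgroup.subset_closure ⟨s, hs, rfl⟩
    have hcomm : ⁅s⁻¹, (f s)⁻¹⁆ ∈ Subgroup.closure ((fun s => (f s)⁻¹ * s * f s) '' S) := by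
      apply h f
      exact Subgroup.commutator_mem_commutator (Subgroup.mem_top _) (Subgroup.mem_top _)
    have hs' : s = ((f s)⁻¹ * s * f s) * ⁅s⁻¹, (f s)⁻¹⁆⁻¹ := by
      simp only [commutatorElement_def]
      group
    show s ∈ Subgroup.closure ((fun s => (f s)⁻¹ * s * f s) '' S)
    rw [hs']
    exact Subgroup.mul_mem _ hc (Subgroup.inv_mem _ hcomm)
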